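/- (Lemma 1, inequality (5.1).) For any policy π, any t ≥ 1, any measurable set A, and any x > 0, P( |θ̂_π(t) − θ| > x and A ) ≤ 2 [ E exp( −x² T_π(t) / (2σ²) ) · I{ |θ̂_π(t) − θ| > x, A } ]^{1/2}. -/

import Mathlib

open MeasureTheory ProbabilityTheory

noncomputable section

namespace OneArmedBandit

/-- The model of Woodroofe's one-armed bandit problem with covariates: the covariates
`X_t` are i.i.d. with common law `PX`, the noise variables `ε_t` are i.i.d. centered
Gaussian with variance `σ²`, and all these random variables are mutually independent
under the probability measure `P`. -/
structure Model (Ω : Type) [MeasurableSpace Ω] where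
  P : Measure Ω
  isProb : IsProbabilityMeasure P
  X : ℕ → Ω → ℝ
  eps : ℕ → Ω → ℝ
  σ : ℝ
  σ_pos : 0 < σ
  PX : Measure ℝ
  PX_prob : IsProbabilityMeasure PX
  meas_X : ∀ t, Measurable (X t)
  meas_eps : ∀ t, Measurable (eps t)
  law_X : ∀ t, P.map (X t) = PX
  law_eps : ∀ t, P.map (eps t) = gaussianReal 0 ⟨σ ^ 2, sq_nonneg σ⟩
  indep : iIndepFun (Sum.elim X eps) P

variable {Ω : Type} [MeasurableSpace Ω]

/-- The reward of arm 1 at time `t`: `Y_t = X_t − θ + ε_t` (arm 0 yields reward 0). -/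
def Model.Y (M : Model Ω) (θ : ℝ) (t : ℕ) (ω : Ω) : ℝ := M.X t ω - θ + M.eps t ω

/-- `T_π(t) = ∑_{s=1}^t π_s`, the number of pulls of arm 1 up to time `t`. -/
def Tpulls (π : ℕ → Ω → ℝ) (t : ℕ) (ω : Ω) : ℝ := ∑ s ∈ Finset.Icc 1 t, π s ω

/-- The estimator `θ̂_π(t) = T_π(t)⁻¹ ∑_{s=1}^t (X_s − Y_s) π_s`. -/
def thetaHat (M : Model Ω) (θ : ℝ) (π : ℕ → Ω → ℝ) (t : ℕ) (ω : Ω) : ℝ :=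
  (Tpulls π t ω)⁻¹ * ∑ s ∈ Finset.Icc 1 t, (M.X s ω - M.Y θ s ω) * π s ω

/-- `F⁺_t = σ(X_1,…,X_t,X_{t+1}; π_1,…,π_t; π_1Y_1,…,π_tY_t)`. -/
def Fplus (M : Model Ω) (θ : ℝ) (π : ℕ → Ω → ℝ) (t : ℕ) : MeasurableSpace Ω :=
  (⨆ s ∈ Finset.Icc 1 (t + 1), MeasurableSpace.comap (M.X s) inferInstance) ⊔
  (⨆ s ∈ Finset.Icc 1 t, MeasurableSpace.comap (π s) inferInstance) ⊔
  (⨆ s ∈ Finset.Icc 1 t, MeasurableSpace.comap (fun ω => π s ω * M.Y θ s ω) inferInstance)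

/-- `F_t = σ(X_1,…,X_t; π_1,…,π_t; π_1Y_1,…,π_tY_t)`. -/
def Ffilt (M : Model Ω) (θ : ℝ) (π : ℕ → Ω → ℝ) (t : ℕ) : MeasurableSpace Ω :=
  (⨆ s ∈ Finset.Icc 1 t, MeasurableSpace.comap (M.X s) inferInstance) ⊔
  (⨆ s ∈ Finset.Icc 1 t, MeasurableSpace.comap (π s) inferInstance) ⊔
  (⨆ s ∈ Finset.Icc 1 t, MeasurableSpace.comap (fun ω => π s ω * M.Y θ s ω) inferInstance)

/-- A policy: a `{0,1}`-valued sequence of random variables, `π_t` being measurable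
with respect to `F⁺_{t−1}`. -/
structure IsPolicy (M : Model Ω) (θ : ℝ) (π : ℕ → Ω → ℝ) : Prop where
  vals : ∀ t ω, π t ω = 0 ∨ π t ω = 1
  adapted : ∀ t, 1 ≤ t → Measurable[Fplus M θ π (t - 1)] (π t)

/-- The oracle policy `π*_t = I{X_t ≥ θ}`. -/
def oracle (M : Model Ω) (θ : ℝ) (t : ℕ) (ω : Ω) : ℝ := if θ ≤ M.X t ω then 1 else 0

/-- The inferior sampling rate `S_n(π, π*) = ∑_{t=1}^n P(π_t ≠ π*_t)`. -/
def Srate (M : Model Ω) (θ : ℝ) (π : ℕ → Ω → ℝ) (n : ℕ) : ℝ :=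
  ∑ t ∈ Finset.Icc 1 n, (M.P {ω | π t ω ≠ oracle M θ t ω}).toReal

/-- The regret `R_n(π, π*) = E ∑_{t=1}^n |X_t − θ| I{π_t ≠ π*_t}`. -/
def Regret (M : Model Ω) (θ : ℝ) (π : ℕ → Ω → ℝ) (n : ℕ) : ℝ :=
  ∫ ω, (∑ t ∈ Finset.Icc 1 n,
    |M.X t ω - θ| * (if π t ω ≠ oracle M θ t ω then 1 else 0)) ∂M.P

/-- `(θ, P_X)` belongs to the class `𝒫_α` with constants `C_*, x₀, p`. -/
structure InClass (PX : Measure ℝ) (θ Cstar x0 p α : ℝ) : Prop where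
  margin : ∀ x ∈ Set.Ioc (0 : ℝ) x0, (PX (Set.Icc (θ - x) (θ + x))).toReal ≤ Cstar * x ^ α
  p_le : p ≤ (PX (Set.Ici θ)).toReal
  lt_one : (PX (Set.Ici θ)).toReal < 1

/-- `(θ, P_X)` belongs to the class `𝒫'_α`: additionally `∫ |x − θ| P_X(dx) ≤ μ`. -/
structure InClass' (PX : Measure ℝ) (θ Cstar x0 p α μ : ℝ)
    extends InClass PX θ Cstar x0 p α : Prop where
  moment : ∫ x, |x - θ| ∂PX ≤ μ

end OneArmedBandit


namespace OneArmedBandit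

variable {Ω : Type} [MeasurableSpace Ω]

/-- `G_t = σ(X_1,…,X_{t+1}; ε_1,…,ε_t)`. -/
def Gfilt (M : Model Ω) (t : ℕ) : MeasurableSpace Ω :=
  (⨆ s ∈ Finset.Icc 1 (t + 1), MeasurableSpace.comap (M.X s) inferInstance) ⊔
  (⨆ s ∈ Finset.Icc 1 t, MeasurableSpace.comap (M.eps s) inferInstance)

lemma Gfilt_le (M : Model Ω) (t : ℕ) : Gfilt M t ≤ ‹MeasurableSpace Ω› :=
  sup_le (iSup₂_le fun s _ => measurable_iff_comap_le.mp (M.meas_X s))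
    (iSup₂_le fun s _ => measurable_iff_comap_le.mp (M.meas_eps s))

lemma Gfilt_mono (M : Model Ω) {t t' : ℕ} (h : t ≤ t') : Gfilt M t ≤ Gfilt M t' := by
  refine sup_le_sup (iSup₂_le fun s hs => ?_) (iSup₂_le fun s hs => ?_) <;>
  · rw [Finset.mem_Icc] at hs
    exact le_iSup₂_of_le s (Finset.mem_Icc.mpr ⟨hs.1, by omega⟩) le_rfl

lemma measX_Gfilt (M : Model Ω) {s t : ℕ} (h1 : 1 ≤ s) (h2 : s ≤ t + 1) :
    Measurable[Gfilt M t] (M.X s) :=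
  measurable_iff_comap_le.mpr
    (le_trans (le_iSup₂_of_le s (Finset.mem_Icc.mpr ⟨h1, h2⟩) le_rfl) le_sup_left)

lemma measEps_Gfilt (M : Model Ω) {s t : ℕ} (h1 : 1 ≤ s) (h2 : s ≤ t) :
    Measurable[Gfilt M t] (M.eps s) :=
  measurable_iff_comap_le.mpr
    (le_trans (le_iSup₂_of_le s (Finset.mem_Icc.mpr ⟨h1, h2⟩) le_rfl) le_sup_right)

lemma eps_indep_Gfilt (M : Model Ω) (t : ℕ) :
    Indep (MeasurableSpace.comap (M.eps (t + 1)) inferInstance) (Gfilt M t) M.P := by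
  have h := indep_biSup_compl (μ := M.P)
    (s := fun i : ℕ ⊕ ℕ => MeasurableSpace.comap (Sum.elim M.X M.eps i) inferInstance)
    (fun i => by
      cases i with
      | inl s => exact measurable_iff_comap_le.mp (M.meas_X s)
      | inr s => exact measurable_iff_comap_le.mp (M.meas_eps s))
    M.indep.iIndep {Sum.inr (t + 1)}
  refine indep_of_indep_of_le_right (indep_of_indep_of_le_left h ?_) ?_
  · exact le_iSup₂_of_le (Sum.inr (t + 1)) rfl le_rfl
  · refine sup_le (iSup₂_le fun s hs => ?_) (iSup₂_le fun s hs => ?_)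
    · exact le_iSup₂_of_le (Sum.inl s) (by simp) le_rfl
    · rw [Finset.mem_Icc] at hs
      exact le_iSup₂_of_le (Sum.inr s) (by simp; omega) le_rfl

lemma Fplus_le_Gfilt (M : Model Ω) (θ : ℝ) {π : ℕ → Ω → ℝ} (hπ : IsPolicy M θ π) :
    ∀ t, Fplus M θ π t ≤ Gfilt M t := by
  intro t
  induction t using Nat.strong_induction_on with
  | _ t ih =>
    have hπle : ∀ s, 1 ≤ s → s ≤ t → MeasurableSpace.comap (π s) inferInstance ≤ Gfilt M t := by
      intro s h1 h2
      refine le_trans (measurable_iff_comap_le.mp (hπ.adapted s h1)) ?_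
      exact le_trans (ih (s - 1) (by omega)) (Gfilt_mono M (by omega))
    refine sup_le (sup_le le_sup_left (iSup₂_le fun s hs => ?_)) (iSup₂_le fun s hs => ?_)
    · rw [Finset.mem_Icc] at hs; exact hπle s hs.1 hs.2
    · rw [Finset.mem_Icc] at hs
      refine measurable_iff_comap_le.mp (Measurable.mul ?_ ?_)
      · exact measurable_iff_comap_le.mpr (hπle s hs.1 hs.2)
      · exact ((measX_Gfilt M hs.1 (by omega)).sub measurable_const).add
          (measEps_Gfilt M hs.1 hs.2)

lemma meas_pi (M : Model Ω) (θ : ℝ) {π : ℕ → Ω → ℝ} (hπ : IsPolicy M θ π) {s : ℕ}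
    (h1 : 1 ≤ s) : Measurable (π s) :=
  (hπ.adapted s h1).mono
    (le_trans (Fplus_le_Gfilt M θ hπ (s - 1)) (Gfilt_le M (s - 1))) le_rfl

lemma pi_meas_Gfilt (M : Model Ω) (θ : ℝ) {π : ℕ → Ω → ℝ} (hπ : IsPolicy M θ π) {s t : ℕ}
    (h1 : 1 ≤ s) (h2 : s ≤ t + 1) : Measurable[Gfilt M t] (π s) :=
  (hπ.adapted s h1).mono
    (le_trans (Fplus_le_Gfilt M θ hπ (s - 1)) (Gfilt_mono M (by omega))) le_rfl

lemma gaussianReal_exp_integral (v : NNReal) (hv : v ≠ 0) (l : ℝ) :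
    Integrable (fun y => Real.exp (l * y)) (gaussianReal 0 v) ∧
      ∫ y, Real.exp (l * y) ∂(gaussianReal 0 v) = Real.exp (l ^ 2 * v / 2) := by
  have hv' : (0 : ℝ) < v := by
    have := pos_iff_ne_zero.mpr hv
    exact_mod_cast this
  have hne : (v : ℝ) ≠ 0 := ne_of_gt hv'
  have key : ∀ x : ℝ, gaussianPDFReal 0 v x * Real.exp (l * x)
      = Real.exp (l ^ 2 * v / 2) * gaussianPDFReal (l * v) v x := by
    intro x
    simp only [gaussianPDFReal, sub_zero]
    have hexp : -x ^ 2 / (2 * (v : ℝ)) + l * x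
        = -(x - l * (v : ℝ)) ^ 2 / (2 * (v : ℝ)) + l ^ 2 * (v : ℝ) / 2 := by
      field_simp
      ring
    rw [mul_assoc, ← Real.exp_add, hexp, Real.exp_add]
    ring
  have hpdf_meas : Measurable fun x => Real.toNNReal (gaussianPDFReal 0 v x) :=
    (measurable_gaussianPDFReal 0 v).real_toNNReal
  have hmap : gaussianReal 0 v
      = (volume : Measure ℝ).withDensity
          fun x => ((Real.toNNReal (gaussianPDFReal 0 v x) : NNReal) : ENNReal) := by
    rw [gaussianReal_of_var_ne_zero 0 hv]
    rfl
  have hsmul : (fun x => Real.toNNReal (gaussianPDFReal 0 v x) • Real.exp (l * x))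
      = fun x => Real.exp (l ^ 2 * v / 2) * gaussianPDFReal (l * v) v x := by
    funext x
    rw [NNReal.smul_def, Real.coe_toNNReal _ (gaussianPDFReal_nonneg 0 v x), smul_eq_mul, key x]
  constructor
  · rw [hmap, integrable_withDensity_iff_integrable_smul hpdf_meas, hsmul]
    exact (integrable_gaussianPDFReal (l * v) v).const_mul _
  · rw [hmap, integral_withDensity_eq_integral_smul hpdf_meas, hsmul,
      integral_const_mul, integral_gaussianPDFReal_eq_one (l * v) hv, mul_one]

lemma exp_eps_integral (M : Model Ω) (s : ℕ) (l : ℝ) :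
    Integrable (fun ω => Real.exp (l * M.eps s ω)) M.P ∧
      ∫ ω, Real.exp (l * M.eps s ω) ∂M.P = Real.exp (l ^ 2 * M.σ ^ 2 / 2) := by
  have hv : (⟨M.σ ^ 2, sq_nonneg M.σ⟩ : NNReal) ≠ 0 := by
    intro h
    have h2 : ((⟨M.σ ^ 2, sq_nonneg M.σ⟩ : NNReal) : ℝ) = 0 := by rw [h]; simp
    simp only [NNReal.coe_mk] at h2
    exact (pow_ne_zero 2 (ne_of_gt M.σ_pos)) h2
  obtain ⟨hint, heq⟩ := gaussianReal_exp_integral _ hv l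
  have hmeas : Measurable fun y : ℝ => Real.exp (l * y) :=
    (measurable_const.mul measurable_id).exp
  have h1 : Integrable (fun y => Real.exp (l * y)) (M.P.map (M.eps s)) := by
    rw [M.law_eps s]; exact hint
  constructor
  · exact (integrable_map_measure hmeas.aestronglyMeasurable
      (M.meas_eps s).aemeasurable).mp h1
  · calc ∫ ω, Real.exp (l * M.eps s ω) ∂M.P
        = ∫ y, Real.exp (l * y) ∂(M.P.map (M.eps s)) :=
          (integral_map (M.meas_eps s).aemeasurable hmeas.aestronglyMeasurable).symm
      _ = Real.exp (l ^ 2 * M.σ ^ 2 / 2) := by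
          rw [M.law_eps s, heq]; rfl

/-- The key exponential supermartingale bound. -/
lemma exp_key (M : Model Ω) (θ : ℝ) {π : ℕ → Ω → ℝ} (hπ : IsPolicy M θ π) (l : ℝ) :
    ∀ t : ℕ, Integrable (fun ω => Real.exp (∑ s ∈ Finset.Icc 1 t,
        (l * M.eps s ω * π s ω - l ^ 2 * M.σ ^ 2 / 2 * π s ω))) M.P ∧
      ∫ ω, Real.exp (∑ s ∈ Finset.Icc 1 t,
        (l * M.eps s ω * π s ω - l ^ 2 * M.σ ^ 2 / 2 * π s ω)) ∂M.P ≤ 1 := by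
  haveI := M.isProb
  intro t
  induction t with
  | zero =>
      simp only [show Finset.Icc 1 0 = (∅ : Finset ℕ) from rfl, Finset.sum_empty, Real.exp_zero]
      exact ⟨integrable_const 1, by simp⟩
  | succ t ih =>
      obtain ⟨ihInt, ihLe⟩ := ih
      set c : ℝ := l ^ 2 * M.σ ^ 2 / 2 with hc
      set f : Ω → ℝ := fun ω => Real.exp (∑ s ∈ Finset.Icc 1 t,
        (l * M.eps s ω * π s ω - c * π s ω)) with hf
      set F : Ω → ℝ := fun ω => f ω * π (t + 1) ω with hF
      set g : Ω → ℝ := fun ω => Real.exp (l * M.eps (t + 1) ω - c) with hg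
      have hp_meas : Measurable[Gfilt M t] (π (t + 1)) :=
        pi_meas_Gfilt M θ hπ (by omega) le_rfl
      have hf_meas : Measurable[Gfilt M t] f := by
        apply Measurable.exp
        apply Finset.measurable_sum
        intro s hs
        rw [Finset.mem_Icc] at hs
        exact ((measurable_const.mul (measEps_Gfilt M hs.1 hs.2)).mul
          (pi_meas_Gfilt M θ hπ hs.1 (by omega))).sub
          (measurable_const.mul (pi_meas_Gfilt M θ hπ hs.1 (by omega)))
      have hF_meas : Measurable[Gfilt M t] F := hf_meas.mul hp_meas
      have hF_meas' : Measurable F := hF_meas.mono (Gfilt_le M t) le_rfl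
      have hindep : IndepFun F (M.eps (t + 1)) M.P := by
        rw [IndepFun_iff_Indep]
        exact indep_of_indep_of_le_left (eps_indep_Gfilt M t).symm
          (measurable_iff_comap_le.mp hF_meas)
      have hindep2 : IndepFun F g M.P :=
        hindep.comp (φ := id) (ψ := fun y => Real.exp (l * y - c)) measurable_id
          (((measurable_const.mul measurable_id).sub measurable_const).exp)
      have hπ01 : ∀ s ω, 0 ≤ π s ω ∧ π s ω ≤ 1 := by
        intro s ω
        rcases hπ.vals s ω with h | h <;> rw [h] <;> norm_num
      have hIF : Integrable F M.P := by
        refine Integrable.mono ihInt hF_meas'.aestronglyMeasurable (ae_of_all _ fun ω => ?_)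
        have h0 := (hπ01 (t + 1) ω).1
        have h1 := (hπ01 (t + 1) ω).2
        simp only [hF, Real.norm_eq_abs, abs_mul]
        calc |f ω| * |π (t + 1) ω| ≤ |f ω| * 1 := by
              apply mul_le_mul_of_nonneg_left _ (abs_nonneg _)
              rw [abs_of_nonneg h0]; exact h1
          _ = ‖f ω‖ := by rw [mul_one, Real.norm_eq_abs]
      have hIg : Integrable g M.P := by
        have : g = fun ω => Real.exp (-c) * Real.exp (l * M.eps (t + 1) ω) := by
          funext ω
          show Real.exp (l * M.eps (t + 1) ω - c) = _
          rw [← Real.exp_add]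
          congr 1
          ring
        rw [this]
        exact ((exp_eps_integral M (t + 1) l).1).const_mul _
      have hg_int : ∫ ω, g ω ∂M.P = 1 := by
        have : g = fun ω => Real.exp (-c) * Real.exp (l * M.eps (t + 1) ω) := by
          funext ω
          show Real.exp (l * M.eps (t + 1) ω - c) = _
          rw [← Real.exp_add]
          congr 1
          ring
        rw [this, integral_const_mul, (exp_eps_integral M (t + 1) l).2, ← Real.exp_add, hc]
        simp
      have hIFg : Integrable (F * g) M.P := hindep2.integrable_mul hIF hIg
      have hFg_int : ∫ ω, F ω * g ω ∂M.P = (∫ ω, F ω ∂M.P) * ∫ ω, g ω ∂M.P :=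
        hindep2.integral_fun_mul_eq_mul_integral hIF.aestronglyMeasurable hIg.aestronglyMeasurable
      have hptw : (fun ω => Real.exp (∑ s ∈ Finset.Icc 1 (t + 1),
          (l * M.eps s ω * π s ω - c * π s ω)))
          = fun ω => f ω + (F ω * g ω - F ω) := by
        funext ω
        rw [Finset.sum_Icc_succ_top (by omega : 1 ≤ t + 1), Real.exp_add]
        have hsub : Real.exp (l * M.eps (t + 1) ω * π (t + 1) ω - c * π (t + 1) ω)
            = 1 + π (t + 1) ω * (g ω - 1) := by
          rcases hπ.vals (t + 1) ω with h | h <;> rw [h] <;> simp [hg]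
        rw [hsub, hf, hF, hg]
        ring
      constructor
      · rw [hptw]
        exact ihInt.add (hIFg.sub hIF)
      · have hIFg' : Integrable (fun ω => F ω * g ω) M.P := hIFg
        have hI2 : Integrable (fun ω => F ω * g ω - F ω) M.P := hIFg'.sub hIF
        rw [hptw, integral_add ihInt hI2, integral_sub hIFg' hIF, hFg_int,
          hg_int, mul_one]
        simpa using ihLe

lemma one_le_amgm {r : ℝ} (hr : 0 < r) (u : ℝ) :
    1 ≤ (2 * r)⁻¹ * Real.exp (-u) + r / 2 * Real.exp u := by
  have hE : 0 < Real.exp u := Real.exp_pos u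
  rw [Real.exp_neg, ← sub_nonneg]
  have heq : (2 * r)⁻¹ * (Real.exp u)⁻¹ + r / 2 * Real.exp u - 1
      = (r * Real.exp u - 1) ^ 2 / (2 * r * Real.exp u) := by
    field_simp
    ring
  rw [heq]
  exact div_nonneg (sq_nonneg _) (by positivity)

end OneArmedBandit

namespace OneArmedBandit

/-- Lemma 1, inequality (5.1): for any policy `π`, any `t ≥ 1`, any measurable set `A`
and any `x > 0`,
`P(|θ̂_π(t) − θ| > x, A) ≤ 2 [E exp(−x² T_π(t)/(2σ²)) I{|θ̂_π(t) − θ| > x, A}]^{1/2}`. -/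
theorem lemma1_self_normalized (Ω : Type) [MeasurableSpace Ω] (M : Model Ω) (θ : ℝ)
    (π : ℕ → Ω → ℝ) (hπ : IsPolicy M θ π) (t : ℕ) (ht : 1 ≤ t)
    (A : Set Ω) (hA : MeasurableSet A) (x : ℝ) (hx : 0 < x) :
    (M.P ({ω | x < |thetaHat M θ π t ω - θ|} ∩ A)).toReal ≤
      2 * Real.sqrt (∫ ω, Real.exp (-(x ^ 2) * Tpulls π t ω / (2 * M.σ ^ 2)) *
        Set.indicator ({ω | x < |thetaHat M θ π t ω - θ|} ∩ A) (fun _ => (1 : ℝ)) ω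
        ∂M.P) := by
  haveI := M.isProb
  set B : Set Ω := {ω | x < |thetaHat M θ π t ω - θ|} ∩ A with hBdef
  have hσ2 : (0 : ℝ) < M.σ ^ 2 := pow_pos M.σ_pos 2
  have hπ01 : ∀ s ω, 0 ≤ π s ω ∧ π s ω ≤ 1 := by
    intro s ω; rcases hπ.vals s ω with h | h <;> rw [h] <;> norm_num
  have hmeas_pi : ∀ s ∈ Finset.Icc 1 t, Measurable (π s) :=
    fun s hs => meas_pi M θ hπ (Finset.mem_Icc.mp hs).1
  have hT_meas : Measurable (Tpulls π t) := Finset.measurable_sum _ hmeas_pi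
  have hθmeas : Measurable fun ω => thetaHat M θ π t ω - θ := by
    apply Measurable.sub _ measurable_const
    apply Measurable.mul hT_meas.inv
    apply Finset.measurable_sum
    intro s hs
    exact ((M.meas_X s).sub (((M.meas_X s).sub measurable_const).add (M.meas_eps s))).mul
      (hmeas_pi s hs)
  have hBmeas : MeasurableSet B :=
    (measurableSet_lt measurable_const hθmeas.abs).inter hA
  have hT_nonneg : ∀ ω, 0 ≤ Tpulls π t ω :=
    fun ω => Finset.sum_nonneg fun s _ => (hπ01 s ω).1
  have hT_le : ∀ ω, Tpulls π t ω ≤ (t : ℝ) := by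
    intro ω
    calc Tpulls π t ω ≤ ∑ s ∈ Finset.Icc 1 t, (1 : ℝ) :=
          Finset.sum_le_sum fun s _ => (hπ01 s ω).2
      _ = t := by simp
  have hsum : ∀ (l' : ℝ) (ω : Ω), (∑ s ∈ Finset.Icc 1 t,
      (l' * M.eps s ω * π s ω - l' ^ 2 * M.σ ^ 2 / 2 * π s ω))
      = l' * (∑ s ∈ Finset.Icc 1 t, M.eps s ω * π s ω)
        - l' ^ 2 * M.σ ^ 2 / 2 * Tpulls π t ω := by
    intro l' ω
    unfold Tpulls
    rw [Finset.sum_sub_distrib, Finset.mul_sum, Finset.mul_sum]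
    congr 1
    exact Finset.sum_congr rfl fun s _ => by ring
  have hxT : ∀ ω ∈ B, x * Tpulls π t ω ≤ |∑ s ∈ Finset.Icc 1 t, M.eps s ω * π s ω| := by
    intro ω hω
    rw [hBdef] at hω
    have hω1 : x < |thetaHat M θ π t ω - θ| := hω.1
    have hsum2 : (∑ s ∈ Finset.Icc 1 t, (M.X s ω - M.Y θ s ω) * π s ω)
        = θ * Tpulls π t ω - (∑ s ∈ Finset.Icc 1 t, M.eps s ω * π s ω) := by
      unfold Model.Y Tpulls
      rw [Finset.mul_sum, ← Finset.sum_sub_distrib]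
      exact Finset.sum_congr rfl fun s _ => by ring
    by_cases hT0 : Tpulls π t ω = 0
    · have hz : ∀ s ∈ Finset.Icc 1 t, π s ω = 0 := by
        intro s hs
        exact (Finset.sum_eq_zero_iff_of_nonneg (fun s _ => (hπ01 s ω).1)).mp hT0 s hs
      have hS0 : (∑ s ∈ Finset.Icc 1 t, M.eps s ω * π s ω) = 0 :=
        Finset.sum_eq_zero fun s hs => by rw [hz s hs, mul_zero]
      rw [hT0, hS0, mul_zero, abs_zero]
    · have hTpos : 0 < Tpulls π t ω := lt_of_le_of_ne (hT_nonneg ω) (Ne.symm hT0)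
      have hθeq : thetaHat M θ π t ω - θ
          = -((∑ s ∈ Finset.Icc 1 t, M.eps s ω * π s ω) / Tpulls π t ω) := by
        unfold thetaHat
        rw [hsum2]
        field_simp
        ring
      have habs2 : |thetaHat M θ π t ω - θ| = |∑ s ∈ Finset.Icc 1 t, M.eps s ω * π s ω| / Tpulls π t ω := by
        rw [hθeq, abs_neg, abs_div, abs_of_pos hTpos]
      rw [habs2] at hω1
      exact le_of_lt ((lt_div_iff₀ hTpos).mp hω1)
  set lam := x / M.σ ^ 2 with hlamdef
  have hlam_pos : 0 < lam := div_pos hx hσ2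
  have hcoef : lam ^ 2 * M.σ ^ 2 / 2 = x ^ 2 / (2 * M.σ ^ 2) := by
    rw [hlamdef]; field_simp
  have hcoef' : (-lam) ^ 2 * M.σ ^ 2 / 2 = x ^ 2 / (2 * M.σ ^ 2) := by
    rw [neg_sq]; exact hcoef
  set c := x ^ 2 / (2 * M.σ ^ 2) with hcdef
  have hc_pos : 0 < c := by rw [hcdef]; positivity
  obtain ⟨hEp_int, hEp_le⟩ := exp_key M θ hπ lam t
  obtain ⟨hEm_int, hEm_le⟩ := exp_key M θ hπ (-lam) t
  have hkey : ∀ ω ∈ B, Real.exp (c * Tpulls π t ω)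
      ≤ Real.exp (∑ s ∈ Finset.Icc 1 t,
          (lam * M.eps s ω * π s ω - lam ^ 2 * M.σ ^ 2 / 2 * π s ω))
        + Real.exp (∑ s ∈ Finset.Icc 1 t,
          ((-lam) * M.eps s ω * π s ω - (-lam) ^ 2 * M.σ ^ 2 / 2 * π s ω)) := by
    intro ω hω
    rw [hsum lam ω, hsum (-lam) ω, hcoef, hcoef']
    have h2 : c * Tpulls π t ω + c * Tpulls π t ω ≤ lam * |∑ s ∈ Finset.Icc 1 t, M.eps s ω * π s ω| := by
      have h3 : lam * (x * Tpulls π t ω) ≤ lam * |∑ s ∈ Finset.Icc 1 t, M.eps s ω * π s ω| :=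
        mul_le_mul_of_nonneg_left (hxT ω hω) hlam_pos.le
      have h4 : c * Tpulls π t ω + c * Tpulls π t ω = lam * (x * Tpulls π t ω) := by
        rw [hcdef, hlamdef]; field_simp; ring
      linarith
    rcases abs_cases (∑ s ∈ Finset.Icc 1 t, M.eps s ω * π s ω) with ⟨habs, _⟩ | ⟨habs, _⟩
    · rw [habs] at h2
      have h5 : c * Tpulls π t ω ≤ lam * (∑ s ∈ Finset.Icc 1 t, M.eps s ω * π s ω) - c * Tpulls π t ω := by linarith
      exact le_trans (Real.exp_le_exp.mpr h5) (le_add_of_nonneg_right (Real.exp_pos _).le)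
    · rw [habs] at h2
      have h6 : (-lam) * (∑ s ∈ Finset.Icc 1 t, M.eps s ω * π s ω) = lam * -(∑ s ∈ Finset.Icc 1 t, M.eps s ω * π s ω) := by ring
      have h5 : c * Tpulls π t ω ≤ (-lam) * (∑ s ∈ Finset.Icc 1 t, M.eps s ω * π s ω) - c * Tpulls π t ω := by
        rw [h6]; linarith
      exact le_trans (Real.exp_le_exp.mpr h5) (le_add_of_nonneg_left (Real.exp_pos _).le)
  have hexp_arg : ∀ ω : Ω, -(x ^ 2) * Tpulls π t ω / (2 * M.σ ^ 2) = -(c * Tpulls π t ω) := by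
    intro ω; rw [hcdef]; ring
  have hind_le : ∀ ω, |Set.indicator B (fun _ => (1 : ℝ)) ω| ≤ 1 := by
    intro ω
    by_cases hω : ω ∈ B
    · simp [Set.indicator_of_mem hω]
    · simp [Set.indicator_of_notMem hω]
  have hf1_meas : Measurable fun ω => Real.exp (-(x ^ 2) * Tpulls π t ω / (2 * M.σ ^ 2)) * Set.indicator B (fun _ => (1 : ℝ)) ω :=
    (((hT_meas.const_mul _).div_const _).exp).mul (measurable_const.indicator hBmeas)
  have hf1_int : Integrable (fun ω => Real.exp (-(x ^ 2) * Tpulls π t ω / (2 * M.σ ^ 2)) * Set.indicator B (fun _ => (1 : ℝ)) ω) M.P := by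
    refine Integrable.mono' (integrable_const 1) hf1_meas.aestronglyMeasurable
      (ae_of_all _ fun ω => ?_)
    rw [Real.norm_eq_abs, abs_mul]
    have h1 : |Real.exp (-(x ^ 2) * Tpulls π t ω / (2 * M.σ ^ 2))| ≤ 1 := by
      rw [abs_of_nonneg (Real.exp_nonneg _)]
      apply Real.exp_le_one_iff.mpr
      apply div_nonpos_of_nonpos_of_nonneg _ (by linarith)
      exact mul_nonpos_of_nonpos_of_nonneg (neg_nonpos.mpr (sq_nonneg x)) (hT_nonneg ω)
    exact mul_le_one₀ h1 (abs_nonneg _) (hind_le ω)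
  have hf2_meas : Measurable fun ω => Set.indicator B (fun _ => (1 : ℝ)) ω * Real.exp (c * Tpulls π t ω) :=
    (measurable_const.indicator hBmeas).mul ((hT_meas.const_mul _).exp)
  have hf2_int : Integrable (fun ω => Set.indicator B (fun _ => (1 : ℝ)) ω * Real.exp (c * Tpulls π t ω)) M.P := by
    refine Integrable.mono' (integrable_const (Real.exp (c * t)))
      hf2_meas.aestronglyMeasurable (ae_of_all _ fun ω => ?_)
    rw [Real.norm_eq_abs, abs_mul]
    have h1 : |Real.exp (c * Tpulls π t ω)| ≤ Real.exp (c * t) := by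
      rw [abs_of_nonneg (Real.exp_nonneg _)]
      exact Real.exp_le_exp.mpr (mul_le_mul_of_nonneg_left (hT_le ω) hc_pos.le)
    calc |Set.indicator B (fun _ => (1 : ℝ)) ω| * |Real.exp (c * Tpulls π t ω)|
        ≤ 1 * Real.exp (c * t) :=
          mul_le_mul (hind_le ω) h1 (abs_nonneg _) zero_le_one
      _ = Real.exp (c * t) := one_mul _
  have hJ2 : ∫ ω, Set.indicator B (fun _ => (1 : ℝ)) ω * Real.exp (c * Tpulls π t ω) ∂M.P ≤ 2 := by
    have hmono : ∀ ω : Ω, Set.indicator B (fun _ => (1 : ℝ)) ω * Real.exp (c * Tpulls π t ω)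
        ≤ Real.exp (∑ s ∈ Finset.Icc 1 t,
            (lam * M.eps s ω * π s ω - lam ^ 2 * M.σ ^ 2 / 2 * π s ω))
          + Real.exp (∑ s ∈ Finset.Icc 1 t,
            ((-lam) * M.eps s ω * π s ω - (-lam) ^ 2 * M.σ ^ 2 / 2 * π s ω)) := by
      intro ω
      by_cases hω : ω ∈ B
      · rw [Set.indicator_of_mem hω, one_mul]
        exact hkey ω hω
      · rw [Set.indicator_of_notMem hω, zero_mul]
        positivity
    calc ∫ ω, Set.indicator B (fun _ => (1 : ℝ)) ω * Real.exp (c * Tpulls π t ω) ∂M.P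
        ≤ ∫ ω, (Real.exp (∑ s ∈ Finset.Icc 1 t,
            (lam * M.eps s ω * π s ω - lam ^ 2 * M.σ ^ 2 / 2 * π s ω))
          + Real.exp (∑ s ∈ Finset.Icc 1 t,
            ((-lam) * M.eps s ω * π s ω - (-lam) ^ 2 * M.σ ^ 2 / 2 * π s ω))) ∂M.P :=
          integral_mono hf2_int (hEp_int.add hEm_int) hmono
      _ = (∫ ω, Real.exp (∑ s ∈ Finset.Icc 1 t,
            (lam * M.eps s ω * π s ω - lam ^ 2 * M.σ ^ 2 / 2 * π s ω)) ∂M.P)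
          + ∫ ω, Real.exp (∑ s ∈ Finset.Icc 1 t,
            ((-lam) * M.eps s ω * π s ω - (-lam) ^ 2 * M.σ ^ 2 / 2 * π s ω)) ∂M.P :=
          integral_add hEp_int hEm_int
      _ ≤ 2 := by linarith
  have hmain : ∀ r : ℝ, 0 < r →
      (M.P B).toReal ≤ (∫ ω, Real.exp (-(x ^ 2) * Tpulls π t ω / (2 * M.σ ^ 2)) * Set.indicator B (fun _ => (1 : ℝ)) ω ∂M.P) / (2 * r) + r := by
    intro r hr
    have hPB : (M.P B).toReal = ∫ ω, Set.indicator B (fun _ => (1 : ℝ)) ω ∂M.P :=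
      (integral_indicator_one hBmeas).symm
    have hstep : ∫ ω, Set.indicator B (fun _ => (1 : ℝ)) ω ∂M.P
        ≤ ∫ ω, ((2 * r)⁻¹ * (Real.exp (-(x ^ 2) * Tpulls π t ω / (2 * M.σ ^ 2)) * Set.indicator B (fun _ => (1 : ℝ)) ω) + r / 2 * (Set.indicator B (fun _ => (1 : ℝ)) ω * Real.exp (c * Tpulls π t ω))) ∂M.P := by
      refine integral_mono ((integrable_const (1 : ℝ)).indicator hBmeas)
        ((hf1_int.const_mul _).add (hf2_int.const_mul _)) fun ω => ?_
      by_cases hω : ω ∈ B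
      · rw [Set.indicator_of_mem hω, mul_one, one_mul, hexp_arg ω]
        exact one_le_amgm hr (c * Tpulls π t ω)
      · simp [Set.indicator_of_notMem hω]
    have hadd : ∫ ω, ((2 * r)⁻¹ * (Real.exp (-(x ^ 2) * Tpulls π t ω / (2 * M.σ ^ 2)) * Set.indicator B (fun _ => (1 : ℝ)) ω) + r / 2 * (Set.indicator B (fun _ => (1 : ℝ)) ω * Real.exp (c * Tpulls π t ω))) ∂M.P
        = (2 * r)⁻¹ * (∫ ω, Real.exp (-(x ^ 2) * Tpulls π t ω / (2 * M.σ ^ 2)) * Set.indicator B (fun _ => (1 : ℝ)) ω ∂M.P) + r / 2 * (∫ ω, Set.indicator B (fun _ => (1 : ℝ)) ω * Real.exp (c * Tpulls π t ω) ∂M.P) := by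
      rw [integral_add (hf1_int.const_mul _) (hf2_int.const_mul _),
        integral_const_mul, integral_const_mul]
    have h2 : r / 2 * (∫ ω, Set.indicator B (fun _ => (1 : ℝ)) ω * Real.exp (c * Tpulls π t ω) ∂M.P) ≤ r / 2 * 2 :=
      mul_le_mul_of_nonneg_left hJ2 (by linarith)
    have e1 : (2 * r)⁻¹ * (∫ ω, Real.exp (-(x ^ 2) * Tpulls π t ω / (2 * M.σ ^ 2)) * Set.indicator B (fun _ => (1 : ℝ)) ω ∂M.P) = (∫ ω, Real.exp (-(x ^ 2) * Tpulls π t ω / (2 * M.σ ^ 2)) * Set.indicator B (fun _ => (1 : ℝ)) ω ∂M.P) / (2 * r) :=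
      inv_mul_eq_div _ _
    rw [hPB]
    refine le_trans hstep ?_
    rw [hadd, e1]
    linarith
  have hI_nonneg : 0 ≤ ∫ ω, Real.exp (-(x ^ 2) * Tpulls π t ω / (2 * M.σ ^ 2)) * Set.indicator B (fun _ => (1 : ℝ)) ω ∂M.P :=
    integral_nonneg fun ω => mul_nonneg (Real.exp_nonneg _)
      (Set.indicator_nonneg (fun _ _ => zero_le_one) ω)
  rcases eq_or_lt_of_le hI_nonneg with hI0 | hIpos
  · have hP0 : (M.P B).toReal ≤ 0 := by
      by_contra hcon
      push_neg at hcon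
      have h := hmain ((M.P B).toReal / 2) (by linarith)
      rw [← hI0] at h
      rw [zero_div] at h
      linarith
    have h2 : 0 ≤ 2 * Real.sqrt (∫ ω, Real.exp (-(x ^ 2) * Tpulls π t ω / (2 * M.σ ^ 2)) * Set.indicator B (fun _ => (1 : ℝ)) ω ∂M.P) := by positivity
    linarith
  · have hr := hmain (Real.sqrt (∫ ω, Real.exp (-(x ^ 2) * Tpulls π t ω / (2 * M.σ ^ 2)) * Set.indicator B (fun _ => (1 : ℝ)) ω ∂M.P)) (Real.sqrt_pos.mpr hIpos)
    have hds : (∫ ω, Real.exp (-(x ^ 2) * Tpulls π t ω / (2 * M.σ ^ 2)) * Set.indicator B (fun _ => (1 : ℝ)) ω ∂M.P) / (2 * Real.sqrt (∫ ω, Real.exp (-(x ^ 2) * Tpulls π t ω / (2 * M.σ ^ 2)) * Set.indicator B (fun _ => (1 : ℝ)) ω ∂M.P))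
        = Real.sqrt (∫ ω, Real.exp (-(x ^ 2) * Tpulls π t ω / (2 * M.σ ^ 2)) * Set.indicator B (fun _ => (1 : ℝ)) ω ∂M.P) / 2 := by
      have hsqpos : 0 < Real.sqrt (∫ ω, Real.exp (-(x ^ 2) * Tpulls π t ω / (2 * M.σ ^ 2)) * Set.indicator B (fun _ => (1 : ℝ)) ω ∂M.P) := Real.sqrt_pos.mpr hIpos
      have hmul := Real.mul_self_sqrt hI_nonneg
      rw [div_eq_div_iff (ne_of_gt (mul_pos two_pos hsqpos)) (two_ne_zero)]
      nlinarith [hmul]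
    rw [hds] at hr
    have hs_nonneg := Real.sqrt_nonneg (∫ ω, Real.exp (-(x ^ 2) * Tpulls π t ω / (2 * M.σ ^ 2)) * Set.indicator B (fun _ => (1 : ℝ)) ω ∂M.P)
    linarith

end OneArmedBandit
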